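/- There are no fully-transitive 3-orbit maniplexes: if M is a maniplex whose automorphism group has exactly 3 orbits on flags, then there exists some rank i such that Aut(M) is not transitive on the i-faces of M. Equivalently, every connected properly n-edge-coloured symmetry type graph on 3 vertices satisfying the 4-cycle quotient condition has some colour i whose removal disconnects the graph. -/

import Mathlib

/-- A maniplex of rank `n-1`, given by its flag graph: a connected, properly
`n`-edge-coloured graph on the flag set `F`, encoded by fixed-point-free
involutions `r c` (one for each colour), with the commuting 4-cycle condition
for colours differing by at least 2. -/
structure Maniplex (n : ℕ) (F : Type) where
  r : Fin n → Equiv.Perm F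
  invol : ∀ c, r c * r c = 1
  fixfree : ∀ c v, r c v ≠ v
  comm : ∀ i j : Fin n, (i : ℕ) + 2 ≤ (j : ℕ) → r i * r j = r j * r i
  alt4 : ∀ i j : Fin n, (i : ℕ) + 2 ≤ (j : ℕ) → ∀ v, r i v ≠ r j v
  conn : ∀ u v : F, ∃ g ∈ Subgroup.closure (Set.range r), g u = v

/-- The automorphism group of a maniplex: colour-preserving automorphisms of
the flag graph, i.e. permutations commuting with every connection generator. -/
def Maniplex.Aut {n : ℕ} {F : Type} (M : Maniplex n F) : Subgroup (Equiv.Perm F) :=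
  Subgroup.centralizer (Set.range M.r)


/-- A symmetry type graph: a connected pregraph (semi-edges allowed, encoded as
fixed points), properly edge-coloured with `n` colours, so that each vertex is
incident to exactly one edge or semi-edge of each colour, and satisfying the
4-cycle quotient condition: if a vertex has non-semi-edges of colours `i, j`
with `|i - j| ≥ 2`, then the `(i,j)`-component containing it has 4 vertices. -/
structure SymGraph (n : ℕ) (V : Type) where
  m : Fin n → Equiv.Perm V
  invol : ∀ c, m c * m c = 1
  conn : ∀ u v : V, ∃ g ∈ Subgroup.closure (Set.range m), g u = v
  quot4 : ∀ i j : Fin n, (i : ℕ) + 2 ≤ (j : ℕ) → ∀ v : V, m i v ≠ v → m j v ≠ v →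
    (MulAction.orbit (Subgroup.closure ({m i, m j} : Set (Equiv.Perm V))) v).ncard = 4

/-- `T^i` is connected: any two vertices are joined by a walk avoiding colour `i`. -/
def SymGraph.delConn {n : ℕ} {V : Type} (G : SymGraph n V) (i : Fin n) : Prop :=
  ∀ u v : V, ∃ g ∈ Subgroup.closure (G.m '' {c : Fin n | c ≠ i}), g u = v

/-- `M` is `i`-face-transitive. -/
def Maniplex.faceTransitive {n : ℕ} {F : Type} (M : Maniplex n F) (i : Fin n) : Prop :=
  ∀ Φ Ψ : F, ∃ g ∈ M.Aut,
    (g : Equiv.Perm F) ''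
        MulAction.orbit (Subgroup.closure (M.r '' {c : Fin n | c ≠ i})) Φ =
      MulAction.orbit (Subgroup.closure (M.r '' {c : Fin n | c ≠ i})) Ψ

/-- There are no fully-transitive 3-orbit maniplexes: if `Aut M` has exactly 3
orbits on flags then `M` fails to be `i`-face-transitive for some rank `i`;
equivalently, every symmetry type graph on 3 vertices has a colour whose
removal disconnects it. -/

private lemma permCongr_mul' {V W : Type*} (e : V ≃ W) (p q : Equiv.Perm V) :
    e.permCongr (p * q) = e.permCongr p * e.permCongr q := by
  ext x; simp [Equiv.permCongr_apply, Equiv.Perm.mul_apply]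

private lemma permCongr_one' {V W : Type*} (e : V ≃ W) :
    e.permCongr (1 : Equiv.Perm V) = 1 := by
  ext x; simp [Equiv.permCongr_apply]

private lemma d1' : ∀ f g : Equiv.Perm (Fin 3), f*f = 1 → g*g = 1 → f*g = g*f →
    f ≠ 1 → g ≠ 1 → f = g := by decide

private lemma d2' : ∀ f g : Equiv.Perm (Fin 3), f*f = 1 → g*g = 1 → f ≠ 1 → g ≠ 1 →
    ¬ ∀ v, f v = v ∨ g v = v := by decide

private lemma commEq' {V : Type*} (e : V ≃ Fin 3) (f g : Equiv.Perm V)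
    (hf : f*f = 1) (hg : g*g = 1) (hc : f*g = g*f) (hf1 : f ≠ 1) (hg1 : g ≠ 1) : f = g := by
  refine e.permCongr.injective (d1' _ _ ?_ ?_ ?_ ?_ ?_)
  · rw [← permCongr_mul', hf, permCongr_one']
  · rw [← permCongr_mul', hg, permCongr_one']
  · rw [← permCongr_mul', ← permCongr_mul', hc]
  · intro h; exact hf1 (e.permCongr.injective (h.trans (permCongr_one' e).symm))
  · intro h; exact hg1 (e.permCongr.injective (h.trans (permCongr_one' e).symm))

private lemma shared' {V : Type*} (e : V ≃ Fin 3) (f g : Equiv.Perm V)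
    (hf : f*f = 1) (hg : g*g = 1) (hf1 : f ≠ 1) (hg1 : g ≠ 1) :
    ∃ v, f v ≠ v ∧ g v ≠ v := by
  have key : ∀ (p : Equiv.Perm V) (w : Fin 3), p (e.symm w) = e.symm w →
      e.permCongr p w = w := by
    intro p w h
    rw [Equiv.permCongr_apply, h]; simp
  have hf1' : e.permCongr f ≠ 1 :=
    fun h => hf1 (e.permCongr.injective (h.trans (permCongr_one' e).symm))
  have hg1' : e.permCongr g ≠ 1 :=
    fun h => hg1 (e.permCongr.injective (h.trans (permCongr_one' e).symm))
  by_contra hno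
  push_neg at hno
  refine d2' (e.permCongr f) (e.permCongr g) ?_ ?_ hf1' hg1' ?_
  · rw [← permCongr_mul', hf, permCongr_one']
  · rw [← permCongr_mul', hg, permCongr_one']
  · intro w
    rcases eq_or_ne (f (e.symm w)) (e.symm w) with h1 | h1
    · exact Or.inl (key f w h1)
    · exact Or.inr (key g w (hno _ h1))

private lemma notTrans' {V : Type*} (h3 : Nat.card V = 3) (S : Set (Equiv.Perm V))
    (t : Equiv.Perm V) (ht : t * t = 1) (hS : ∀ s ∈ S, s = 1 ∨ s = t)
    (htr : ∀ u v : V, ∃ g ∈ Subgroup.closure S, g u = v) : False := by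
  have hcl : ∀ g ∈ Subgroup.closure S, g = 1 ∨ g = t := by
    intro g hg
    induction hg using Subgroup.closure_induction with
    | mem x hx => exact hS x hx
    | one => exact Or.inl rfl
    | mul x y hx hy ihx ihy =>
        rcases ihx with rfl | rfl <;> rcases ihy with rfl | rfl <;> simp [ht]
    | inv x hx ih =>
        rcases ih with rfl | rfl
        · simp
        · exact Or.inr (inv_eq_of_mul_eq_one_right ht)
  obtain ⟨⟨u⟩, -⟩ := Nat.card_pos_iff.mp (by omega : 0 < Nat.card V)
  have hsub : (Set.univ : Set V) ⊆ {u, t u} := by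
    intro v _
    obtain ⟨g, hg, hgu⟩ := htr u v
    rcases hcl g hg with rfl | rfl
    · left; exact hgu.symm
    · right; exact hgu.symm
  have h1 := Set.ncard_le_ncard hsub (Set.toFinite _)
  rw [Set.ncard_univ, h3] at h1
  have h2 : ({u, t u} : Set V).ncard ≤ 2 :=
    (Set.ncard_insert_le _ _).trans (by simp [Set.ncard_singleton])
  omega

private lemma pairOf' {V : Type*} {n : ℕ} (h3 : Nat.card V = 3) (m : Fin n → Equiv.Perm V)
    (hinv : ∀ c, m c * m c = 1) (i : Fin n)
    (htr : ∀ u v : V, ∃ g ∈ Subgroup.closure (m '' {c | c ≠ i}), g u = v) :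
    ∃ c c' : Fin n, c ≠ i ∧ c' ≠ i ∧ m c ≠ 1 ∧ m c' ≠ 1 ∧ m c ≠ m c' := by
  by_contra h
  push_neg at h
  by_cases hex : ∃ c, c ≠ i ∧ m c ≠ 1
  · obtain ⟨c0, hc0i, hc0⟩ := hex
    refine notTrans' h3 _ (m c0) (hinv c0) ?_ htr
    rintro s ⟨c, hc, rfl⟩
    by_cases h1 : m c = 1
    · exact Or.inl h1
    · exact Or.inr (h c c0 hc hc0i h1 hc0)
  · push_neg at hex
    refine notTrans' h3 _ 1 (by simp) ?_ htr
    rintro s ⟨c, hc, rfl⟩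
    exact Or.inl (hex c hc)

private lemma comb' {V : Type*} {n : ℕ} (hn : 0 < n) (m : Fin n → Equiv.Perm V)
    (E : ∀ i j : Fin n, (i:ℕ)+2 ≤ (j:ℕ) → m i ≠ 1 → m j ≠ 1 → m i = m j)
    (H : ∀ i : Fin n, ∃ c c' : Fin n, c ≠ i ∧ c' ≠ i ∧ m c ≠ 1 ∧ m c' ≠ 1 ∧ m c ≠ m c') :
    False := by
  classical
  set N : Finset (Fin n) := Finset.univ.filter (fun c => m c ≠ 1) with hN
  have hmemN : ∀ c : Fin n, c ∈ N ↔ m c ≠ 1 := by intro c; simp [hN]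
  have hNne : N.Nonempty := by
    obtain ⟨c, c', hci, hc'i, hcm, hc'm, hne⟩ := H ⟨0, hn⟩
    exact ⟨c, (hmemN c).mpr hcm⟩
  set c0 := N.min' hNne with hc0
  set c1 := N.max' hNne with hc1'
  have hc0N : c0 ∈ N := N.min'_mem hNne
  have hc1N : c1 ∈ N := N.max'_mem hNne
  have hlow : ∀ x ∈ N, (c0:ℕ) ≤ (x:ℕ) := fun x hx => Fin.le_def.mp (N.min'_le x hx)
  have hhigh : ∀ x ∈ N, (x:ℕ) ≤ (c1:ℕ) := fun x hx => Fin.le_def.mp (N.le_max' x hx)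
  rcases le_or_gt ((c1:ℕ)) ((c0:ℕ)+1) with hspan | hspan
  · obtain ⟨c, c', hci, hc'i, hcm, hc'm, hne⟩ := H c0
    have hcN := (hmemN c).mpr hcm
    have hc'N := (hmemN c').mpr hc'm
    have h1 := hlow c hcN; have h2 := hhigh c hcN
    have h3 := hlow c' hc'N; have h4 := hhigh c' hc'N
    have hcv : (c:ℕ) ≠ (c0:ℕ) := fun h => hci (Fin.ext h)
    have hc'v : (c':ℕ) ≠ (c0:ℕ) := fun h => hc'i (Fin.ext h)
    have hcc' : c = c' := Fin.ext (by omega)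
    exact hne (congrArg m hcc')
  · have hs : m c0 = m c1 :=
      E c0 c1 (by omega) ((hmemN _).mp hc0N) ((hmemN _).mp hc1N)
    have key : ∀ x ∈ N, m x ≠ m c0 → (x:ℕ) = (c0:ℕ)+1 := by
      intro x hx hxne
      have hx1 := (hmemN _).mp hx
      have hxl := hlow x hx; have hxh := hhigh x hx
      by_contra hne
      rcases le_or_gt ((c0:ℕ)+2) (x:ℕ) with h | h
      · exact hxne (E c0 x h ((hmemN _).mp hc0N) hx1).symm
      · have hxc1 : (x:ℕ)+2 ≤ (c1:ℕ) := by omega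
        exact hxne ((E x c1 hxc1 hx1 ((hmemN _).mp hc1N)).trans hs.symm)
    have hk : (c0:ℕ)+1 < n := by have := c1.isLt; omega
    obtain ⟨c, c', hci, hc'i, hcm, hc'm, hne⟩ := H ⟨(c0:ℕ)+1, hk⟩
    have hcN := (hmemN c).mpr hcm
    have hc'N := (hmemN c').mpr hc'm
    by_cases hc : m c = m c0
    · have hc' : m c' ≠ m c0 := fun h => hne (hc.trans h.symm)
      exact hc'i (Fin.ext (key c' hc'N hc'))
    · exact hci (Fin.ext (key c hcN hc))

theorem stmt3 (n : ℕ) :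
    (∀ (F : Type) (M : Maniplex n F),
      {O : Set F | ∃ Φ : F, O = MulAction.orbit M.Aut Φ}.ncard = 3 →
        ∃ i : Fin n, ¬ M.faceTransitive i) ∧
    (∀ (V : Type) [Fintype V], Fintype.card V = 3 →
      ∀ G : SymGraph n V, ∃ i : Fin n, ¬ G.delConn i) := by
  constructor
  · -- Maniplex part
    intro F M hOrb
    by_contra hcon
    push_neg at hcon
    rcases Nat.eq_zero_or_pos n with hn | hn'
    · subst hn
      have hsub : ∀ u v : F, u = v := by
        intro u v
        obtain ⟨g, hg, hgu⟩ := M.conn u v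
        rw [show (Set.range M.r) = ∅ from Set.range_eq_empty _,
          Subgroup.closure_empty, Subgroup.mem_bot] at hg
        subst hg; simpa using hgu
      have hne0 : {O : Set F | ∃ Φ : F, O = MulAction.orbit M.Aut Φ}.ncard ≠ 0 := by
        rw [hOrb]; omega
      obtain ⟨O, Φ0, hO⟩ := Set.nonempty_of_ncard_ne_zero hne0
      have hone : {O : Set F | ∃ Φ : F, O = MulAction.orbit M.Aut Φ}
          = {MulAction.orbit M.Aut Φ0} := by
        ext O'
        simp only [Set.mem_setOf_eq, Set.mem_singleton_iff]
        constructor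
        · rintro ⟨Ψ, rfl⟩; rw [hsub Ψ Φ0]
        · rintro rfl; exact ⟨Φ0, rfl⟩
      rw [hone, Set.ncard_singleton] at hOrb
      omega
    · -- the quotient symmetry type graph
      have hcommpt : ∀ g ∈ M.Aut, ∀ (c : Fin n) (x : F), g (M.r c x) = M.r c (g x) := by
        intro g hg c x
        have h := (Subgroup.mem_centralizer_iff.mp hg) (M.r c) (Set.mem_range_self c)
        have h2 := congrArg (fun p : Equiv.Perm F => p x) h
        simpa [Equiv.Perm.mul_apply] using h2.symm
      have hinvpt : ∀ (c : Fin n) (x : F), M.r c (M.r c x) = x := by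
        intro c x
        have h2 := congrArg (fun p : Equiv.Perm F => p x) (M.invol c)
        simpa [Equiv.Perm.mul_apply] using h2
      letI sa : Setoid F := MulAction.orbitRel M.Aut F
      have hrel : ∀ (c : Fin n) (a b : F), a ≈ b → M.r c a ≈ M.r c b := by
        intro c a b hab
        obtain ⟨g, hg⟩ := hab
        refine ⟨g, ?_⟩
        have hg' : (g : Equiv.Perm F) b = a := hg
        show (g : Equiv.Perm F) (M.r c b) = M.r c a
        rw [hcommpt g.1 g.2 c b, hg']
      let mq : Fin n → Equiv.Perm (Quotient sa) := fun c =>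
        ⟨Quotient.map (M.r c) (hrel c), Quotient.map (M.r c) (hrel c),
          fun x => Quotient.inductionOn x (fun a => by
            simp [Quotient.map_mk, hinvpt]),
          fun x => Quotient.inductionOn x (fun a => by
            simp [Quotient.map_mk, hinvpt])⟩
      have hmq : ∀ (c : Fin n) (a : F), mq c ⟦a⟧ = ⟦M.r c a⟧ := by
        intro c a
        show Quotient.map (M.r c) (hrel c) ⟦a⟧ = ⟦M.r c a⟧
        exact Quotient.map_mk _ _ _
      have hmq_invol : ∀ c, mq c * mq c = 1 := by
        intro c
        apply Equiv.ext
        intro x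
        induction x using Quotient.inductionOn with
        | h a => simp [Equiv.Perm.mul_apply, hmq, hinvpt]
      have hcommq : ∀ i j : Fin n, (i:ℕ)+2 ≤ (j:ℕ) → mq i * mq j = mq j * mq i := by
        intro i j hij
        have hpt : ∀ x : F, M.r i (M.r j x) = M.r j (M.r i x) := by
          intro x
          have h2 := congrArg (fun p : Equiv.Perm F => p x) (M.comm i j hij)
          simpa [Equiv.Perm.mul_apply] using h2
        apply Equiv.ext
        intro x
        induction x using Quotient.inductionOn with
        | h a => simp [Equiv.Perm.mul_apply, hmq, hpt]
      -- cardinality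
      have horb_eq : ∀ a b : F, a ≈ b →
          MulAction.orbit M.Aut a = MulAction.orbit M.Aut b :=
        fun a b hab => MulAction.orbit_eq_iff.mpr hab
      have hcard : Nat.card (Quotient sa) = 3 := by
        let S := {O : Set F | ∃ Φ : F, O = MulAction.orbit M.Aut Φ}
        let f : Quotient sa → S := fun x =>
          Quotient.liftOn x (fun Φ => (⟨MulAction.orbit M.Aut Φ, Φ, rfl⟩ : S))
            (fun a b hab => Subtype.ext (horb_eq a b hab))
        have hfb : Function.Bijective f := by
          constructor
          · intro x y
            induction x using Quotient.inductionOn with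
            | h a =>
              induction y using Quotient.inductionOn with
              | h b =>
                intro hxy
                exact Quotient.sound (MulAction.orbit_eq_iff.mp
                  (congrArg Subtype.val hxy))
          · rintro ⟨O, Ψ, rfl⟩
            exact ⟨⟦Ψ⟧, rfl⟩
        rw [Nat.card_eq_of_bijective f hfb]
        exact (Nat.card_coe_set_eq _).trans hOrb
      haveI : Finite (Quotient sa) := Nat.finite_of_card_ne_zero (by omega)
      have e : Quotient sa ≃ Fin 3 := Finite.equivFinOfCardEq hcard
      have Eq : ∀ i j : Fin n, (i:ℕ)+2 ≤ (j:ℕ) → mq i ≠ 1 → mq j ≠ 1 → mq i = mq j :=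
        fun i j hij => commEq' e (mq i) (mq j) (hmq_invol i) (hmq_invol j) (hcommq i j hij)
      -- transfer of connection-group elements to the quotient
      have T : ∀ (i : Fin n), ∀ h ∈ Subgroup.closure (M.r '' {c | c ≠ i}),
          ∃ H ∈ Subgroup.closure (mq '' {c | c ≠ i}), ∀ a : F, H ⟦a⟧ = ⟦h a⟧ := by
        intro i h hh
        induction hh using Subgroup.closure_induction with
        | mem x hx =>
            obtain ⟨c, hc, rfl⟩ := hx
            exact ⟨mq c, Subgroup.subset_closure ⟨c, hc, rfl⟩, fun a => hmq c a⟩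
        | one => exact ⟨1, Subgroup.one_mem _, fun a => by simp⟩
        | mul x y hx hy ihx ihy =>
            obtain ⟨Hx, hHx, hax⟩ := ihx
            obtain ⟨Hy, hHy, hay⟩ := ihy
            exact ⟨Hx * Hy, Subgroup.mul_mem _ hHx hHy, fun a => by
              simp [Equiv.Perm.mul_apply, hay, hax]⟩
        | inv x hx ih =>
            obtain ⟨H, hH, ha⟩ := ih
            refine ⟨H⁻¹, Subgroup.inv_mem _ hH, fun a => ?_⟩
            have h1 := ha (x⁻¹ a)
            rw [show x (x⁻¹ a) = a from by simp] at h1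
            rw [← h1]
            simp
      -- transitivity on the quotient from i-face-transitivity
      have htr : ∀ (i : Fin n) (u v : Quotient sa),
          ∃ g ∈ Subgroup.closure (mq '' {c | c ≠ i}), g u = v := by
        intro i u v
        obtain ⟨Φ, rfl⟩ := Quotient.exists_rep u
        obtain ⟨Ψ, rfl⟩ := Quotient.exists_rep v
        obtain ⟨g, hg, himg⟩ := hcon i Φ Ψ
        have hmem : g Φ ∈ MulAction.orbit
            (Subgroup.closure (M.r '' {c | c ≠ i})) Ψ := by
          rw [← himg]
          exact ⟨Φ, MulAction.mem_orbit_self Φ, rfl⟩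
        obtain ⟨h, hhΨ⟩ := hmem
        have hhΨ' : (h : Equiv.Perm F) Ψ = g Φ := hhΨ
        obtain ⟨H, hH, haH⟩ := T i h.1 h.2
        have h1 : H ⟦Ψ⟧ = ⟦Φ⟧ := by
          rw [haH Ψ, hhΨ']
          exact Quotient.sound (⟨⟨g, hg⟩, rfl⟩ : g Φ ∈ MulAction.orbit M.Aut Φ)
        refine ⟨H⁻¹, Subgroup.inv_mem _ hH, ?_⟩
        rw [← h1]
        simp
      exact comb' hn' mq Eq (fun i => pairOf' hcard mq hmq_invol i (htr i))
  · -- SymGraph part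
    intro V _ hV G
    by_contra hcon
    push_neg at hcon
    rcases Nat.eq_zero_or_pos n with hn | hn'
    · subst hn
      have hsub : ∀ u v : V, u = v := by
        intro u v
        obtain ⟨g, hg, hgu⟩ := G.conn u v
        rw [show (Set.range G.m) = ∅ from Set.range_eq_empty _,
          Subgroup.closure_empty, Subgroup.mem_bot] at hg
        subst hg; simpa using hgu
      have : Fintype.card V ≤ 1 := Fintype.card_le_one_iff_subsingleton.mpr ⟨hsub⟩
      omega
    · have h3 : Nat.card V = 3 := by rw [Nat.card_eq_fintype_card]; exact hV
      have e : V ≃ Fin 3 := Fintype.equivFinOfCardEq hV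
      have Eq : ∀ i j : Fin n, (i:ℕ)+2 ≤ (j:ℕ) → G.m i ≠ 1 → G.m j ≠ 1 → G.m i = G.m j := by
        intro i j hij hi hj
        exfalso
        obtain ⟨v, hvi, hvj⟩ := shared' e (G.m i) (G.m j) (G.invol i) (G.invol j) hi hj
        have h4 := G.quot4 i j hij v hvi hvj
        have hle : (MulAction.orbit
            (Subgroup.closure ({G.m i, G.m j} : Set (Equiv.Perm V))) v).ncard ≤ 3 := by
          have := Set.ncard_le_ncard (Set.subset_univ
            (MulAction.orbit (Subgroup.closure ({G.m i, G.m j} : Set (Equiv.Perm V))) v))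
            Set.finite_univ
          rwa [Set.ncard_univ, h3] at this
        omega
      exact comb' hn' G.m Eq (fun i => pairOf' h3 G.m G.invol i (hcon i))
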